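/- (Theorem 5.1, stability part) For all t ≥ 0, V*(e(t), W̃(t), e_L(t), x̃(t)) ≤ V*(e(0), W̃(0), 0, 0); in particular, the solution (e, W̃, e_L, x̃) of the modified error dynamics is uniformly bounded: each of sup_{t≥0}‖e(t)‖₂, sup_{t≥0}‖W̃(t)‖_F, sup_{t≥0}‖e_L(t)‖₂, and sup_{t≥0}‖x̃(t)‖₂ is finite. -/

import Mathlib

open Matrix Filter

noncomputable section

/-- Euclidean norm ‖·‖₂ of a vector. -/
def norm2 {n : ℕ} (v : Fin n → ℝ) : ℝ := Real.sqrt (∑ i, v i ^ 2)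

/-- Supremum (infinity) norm ‖·‖_∞ of a vector (the sup norm on `Fin n → ℝ`). -/
def normInf {n : ℕ} (v : Fin n → ℝ) : ℝ := ‖v‖

/-- Frobenius norm ‖·‖_F of a matrix. -/
def normF {N m : ℕ} (W : Matrix (Fin N) (Fin m) ℝ) : ℝ := Real.sqrt (∑ i, ∑ j, W i j ^ 2)

/-- Smallest eigenvalue λ_min of a real symmetric (Hermitian) matrix. -/
def lamMin {n : ℕ} {A : Matrix (Fin n) (Fin n) ℝ} (hA : A.IsHermitian) : ℝ := ⨅ i, hA.eigenvalues i

/-- Largest eigenvalue λ_max of a real symmetric (Hermitian) matrix. -/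
def lamMax {n : ℕ} {A : Matrix (Fin n) (Fin n) ℝ} (hA : A.IsHermitian) : ℝ := ⨆ i, hA.eigenvalues i

/-- A real square matrix is Hurwitz if every (complex) eigenvalue has negative real part. -/
def Hurwitz {n : ℕ} (A : Matrix (Fin n) (Fin n) ℝ) : Prop :=
  ∀ μ : ℂ, (A.map Complex.ofReal).charpoly.IsRoot μ → μ.re < 0

/-- The Lyapunov function V(e, W̃) = eᵀ P e + γ⁻¹ tr((W̃ Λ^{1/2})ᵀ (W̃ Λ^{1/2})). -/
def Vlyap {n N m : ℕ} (γ : ℝ) (P : Matrix (Fin n) (Fin n) ℝ)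
    (Lhalf : Matrix (Fin m) (Fin m) ℝ) (e : Fin n → ℝ) (W : Matrix (Fin N) (Fin m) ℝ) : ℝ :=
  e ⬝ᵥ (P *ᵥ e) + γ⁻¹ * ((W * Lhalf)ᵀ * (W * Lhalf)).trace

/-- The augmented Lyapunov function V* of Theorem 5.1. -/
def Vstar {n N m : ℕ} (γ κ η ξ : ℝ) (P R : Matrix (Fin n) (Fin n) ℝ)
    (hP : P.IsHermitian) (hR : R.IsHermitian)
    (Lhalf : Matrix (Fin m) (Fin m) ℝ)
    (e : Fin n → ℝ) (W : Matrix (Fin N) (Fin m) ℝ) (eL xt : Fin n → ℝ) : ℝ :=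
  Vlyap γ P Lhalf e W + η⁻¹ * κ * (eL ⬝ᵥ (P *ᵥ eL))
    + 2 * ξ * κ⁻¹ * (lamMax hP)⁻¹ * lamMin hR * (xt ⬝ᵥ (P *ᵥ xt))

section aux
variable {n : ℕ}

lemma psd_quad_nonneg {P : Matrix (Fin n) (Fin n) ℝ} (hP : P.PosSemidef)
    (x : Fin n → ℝ) : 0 ≤ x ⬝ᵥ (P *ᵥ x) := by
  simpa using hP.dotProduct_mulVec_nonneg x

lemma dot_sym {P : Matrix (Fin n) (Fin n) ℝ} (hP : P.IsHermitian)
    (x z : Fin n → ℝ) : x ⬝ᵥ (P *ᵥ z) = z ⬝ᵥ (P *ᵥ x) := by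
  have hPt : Pᵀ = P := by
    have := hP; rwa [Matrix.IsHermitian, conjTranspose_eq_transpose_of_trivial] at this
  rw [dotProduct_mulVec, ← mulVec_transpose, dotProduct_comm, hPt]

lemma young_quad {P : Matrix (Fin n) (Fin n) ℝ} (hP : P.PosSemidef)
    (x z : Fin n → ℝ) {ε : ℝ} (hε : 0 < ε) :
    2 * (x ⬝ᵥ (P *ᵥ z)) ≤ ε * (x ⬝ᵥ (P *ᵥ x)) + ε⁻¹ * (z ⬝ᵥ (P *ᵥ z)) := by
  have h0 := psd_quad_nonneg hP (Real.sqrt ε • x - (Real.sqrt ε)⁻¹ • z)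
  have hsε : Real.sqrt ε > 0 := Real.sqrt_pos.2 hε
  have hsq : Real.sqrt ε * Real.sqrt ε = ε := Real.mul_self_sqrt hε.le
  have expand : (Real.sqrt ε • x - (Real.sqrt ε)⁻¹ • z) ⬝ᵥ (P *ᵥ (Real.sqrt ε • x - (Real.sqrt ε)⁻¹ • z))
      = ε * (x ⬝ᵥ (P *ᵥ x)) + ε⁻¹ * (z ⬝ᵥ (P *ᵥ z)) - 2 * (x ⬝ᵥ (P *ᵥ z)) := by
    rw [mulVec_sub, mulVec_smul, mulVec_smul, sub_dotProduct, smul_dotProduct, smul_dotProduct,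
      dotProduct_sub, dotProduct_sub, dotProduct_smul, dotProduct_smul, dotProduct_smul,
      dotProduct_smul, dot_sym hP.1 z x]
    have hinv2 : (Real.sqrt ε)⁻¹ * (Real.sqrt ε)⁻¹ = ε⁻¹ := by rw [← mul_inv, hsq]
    simp only [smul_eq_mul]
    have hs1 : Real.sqrt ε * (Real.sqrt ε)⁻¹ = 1 := mul_inv_cancel₀ hsε.ne'
    linear_combination (x ⬝ᵥ P *ᵥ x) * hsq + (z ⬝ᵥ P *ᵥ z) * hinv2 - 2 * (x ⬝ᵥ P *ᵥ z) * hs1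
  rw [expand] at h0; linarith

lemma quad_decomp {A : Matrix (Fin n) (Fin n) ℝ} (hA : A.IsHermitian)
    (v : Fin n → ℝ) :
    ∃ w : Fin n → ℝ, v ⬝ᵥ (A *ᵥ v) = ∑ i, hA.eigenvalues i * w i ^ 2 ∧
      v ⬝ᵥ v = ∑ i, w i ^ 2 := by
  classical
  set U : Matrix (Fin n) (Fin n) ℝ := (hA.eigenvectorUnitary : Matrix (Fin n) (Fin n) ℝ) with hU
  have hUU : U * star U = 1 := (Matrix.mem_unitaryGroup_iff).mp hA.eigenvectorUnitary.2
  refine ⟨star U *ᵥ v, ?_, ?_⟩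
  · conv_lhs => rw [hA.spectral_theorem, Unitary.conjStarAlgAut_apply]
    rw [← mulVec_mulVec, ← mulVec_mulVec, dotProduct_mulVec]
    have hvU : v ᵥ* U = star U *ᵥ v := by
      rw [star_eq_conjTranspose, conjTranspose_eq_transpose_of_trivial, mulVec_transpose]
    rw [hvU]
    simp only [dotProduct, mulVec_diagonal, Function.comp_apply, ← hU]
    exact Finset.sum_congr rfl fun i _ => by simp only [RCLike.ofReal_real_eq_id, id_eq]; ring
  · have : v ⬝ᵥ v = v ⬝ᵥ ((U * star U) *ᵥ v) := by rw [hUU, one_mulVec]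
    rw [this, ← mulVec_mulVec, dotProduct_mulVec]
    have hvU : v ᵥ* U = star U *ᵥ v := by
      rw [star_eq_conjTranspose, conjTranspose_eq_transpose_of_trivial, mulVec_transpose]
    rw [hvU]
    simp only [dotProduct, ← hU]
    exact Finset.sum_congr rfl fun i _ => by ring

lemma rayleigh_lower (hn : 0 < n) {A : Matrix (Fin n) (Fin n) ℝ} (hA : A.IsHermitian)
    (v : Fin n → ℝ) : lamMin hA * (v ⬝ᵥ v) ≤ v ⬝ᵥ (A *ᵥ v) := by
  haveI : Nonempty (Fin n) := ⟨⟨0, hn⟩⟩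
  obtain ⟨w, h1, h2⟩ := quad_decomp hA v
  rw [h1, h2, lamMin, Finset.mul_sum]
  refine Finset.sum_le_sum fun i _ => ?_
  exact mul_le_mul_of_nonneg_right (ciInf_le (Set.Finite.bddBelow (Set.finite_range _)) i)
    (sq_nonneg _)

lemma rayleigh_upper (hn : 0 < n) {A : Matrix (Fin n) (Fin n) ℝ} (hA : A.IsHermitian)
    (v : Fin n → ℝ) : v ⬝ᵥ (A *ᵥ v) ≤ lamMax hA * (v ⬝ᵥ v) := by
  haveI : Nonempty (Fin n) := ⟨⟨0, hn⟩⟩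
  obtain ⟨w, h1, h2⟩ := quad_decomp hA v
  rw [h1, h2, lamMax, Finset.mul_sum]
  refine Finset.sum_le_sum fun i _ => ?_
  exact mul_le_mul_of_nonneg_right (le_ciSup (Set.Finite.bddAbove (Set.finite_range _)) i)
    (sq_nonneg _)

lemma lamMin_pos (hn : 0 < n) {A : Matrix (Fin n) (Fin n) ℝ} (hA : A.PosDef) :
    0 < lamMin hA.1 := by
  haveI : Nonempty (Fin n) := ⟨⟨0, hn⟩⟩
  obtain ⟨i, hi⟩ := Finite.exists_min hA.1.eigenvalues
  have : hA.1.eigenvalues i ≤ lamMin hA.1 := le_ciInf hi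
  exact lt_of_lt_of_le (hA.eigenvalues_pos i) this

lemma lamMax_pos (hn : 0 < n) {A : Matrix (Fin n) (Fin n) ℝ} (hA : A.PosDef) :
    0 < lamMax hA.1 := by
  haveI : Nonempty (Fin n) := ⟨⟨0, hn⟩⟩
  have : hA.1.eigenvalues ⟨0, hn⟩ ≤ lamMax hA.1 :=
    le_ciSup (Set.Finite.bddAbove (Set.finite_range _)) _
  exact lt_of_lt_of_le (hA.eigenvalues_pos _) this

lemma hasDerivAt_quad (P : Matrix (Fin n) (Fin n) ℝ) {u : ℝ → Fin n → ℝ} {u' : Fin n → ℝ}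
    {t : ℝ} (h : HasDerivAt u u' t) :
    HasDerivAt (fun s => u s ⬝ᵥ (P *ᵥ u s)) (u' ⬝ᵥ (P *ᵥ u t) + u t ⬝ᵥ (P *ᵥ u')) t := by
  have hi := hasDerivAt_pi.mp h
  have H : HasDerivAt (fun s => ∑ i, u s i * ∑ j, P i j * u s j)
      (∑ i, (u' i * ∑ j, P i j * u t j + u t i * ∑ j, P i j * u' j)) t :=
    HasDerivAt.fun_sum fun i _ =>
      ((hi i).mul (HasDerivAt.fun_sum fun j _ => ((hi j).const_mul (P i j))))
  simpa [dotProduct, mulVec, Finset.sum_add_distrib] using H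

lemma two_quad {Ar R P : Matrix (Fin n) (Fin n) ℝ} (hP : P.IsHermitian)
    (hLyap : Arᵀ * P + P * Ar + R = 0) (u w : Fin n → ℝ) :
    (Ar *ᵥ u + w) ⬝ᵥ (P *ᵥ u) + u ⬝ᵥ (P *ᵥ (Ar *ᵥ u + w))
      = -(u ⬝ᵥ (R *ᵥ u)) + 2 * (u ⬝ᵥ (P *ᵥ w)) := by
  have hsum : Arᵀ * P + P * Ar = -R := by
    have := hLyap; linear_combination (norm := module) this
  have h1 : (Ar *ᵥ u) ⬝ᵥ (P *ᵥ u) = u ⬝ᵥ ((Arᵀ * P) *ᵥ u) := by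
    rw [← mulVec_mulVec]
    conv_rhs => rw [dotProduct_mulVec, vecMul_transpose]
  have h2 : u ⬝ᵥ (P *ᵥ (Ar *ᵥ u)) = u ⬝ᵥ ((P * Ar) *ᵥ u) := by rw [mulVec_mulVec]
  have h3 : w ⬝ᵥ (P *ᵥ u) = u ⬝ᵥ (P *ᵥ w) := dot_sym hP w u
  rw [add_dotProduct, mulVec_add, dotProduct_add, h1, h2, h3]
  have h4 : u ⬝ᵥ ((Arᵀ * P) *ᵥ u) + u ⬝ᵥ ((P * Ar) *ᵥ u) = -(u ⬝ᵥ (R *ᵥ u)) := by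
    rw [← dotProduct_add, ← add_mulVec, hsum, neg_mulVec, dotProduct_neg]
  linarith

lemma cross_id {n N m : ℕ} (P : Matrix (Fin n) (Fin n) ℝ) (B : Matrix (Fin n) (Fin m) ℝ)
    (W : Matrix (Fin N) (Fin m) ℝ) (σ : Fin N → ℝ) (e : Fin n → ℝ) (d : Fin m → ℝ) :
    e ⬝ᵥ (P *ᵥ ((B * diagonal (fun j => d j * d j) * Wᵀ) *ᵥ σ))
      = ∑ j, ∑ i, (σ i * ((e ᵥ* (P * B)) j)) * d j * (W i j * d j) := by
  rw [mulVec_mulVec, dotProduct_mulVec]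
  have hassoc : P * (B * diagonal (fun j => d j * d j) * Wᵀ)
      = ((P * B) * diagonal (fun j => d j * d j)) * Wᵀ := by
    rw [← Matrix.mul_assoc, ← Matrix.mul_assoc]
  rw [hassoc, ← vecMul_vecMul, ← vecMul_vecMul]
  rw [Finset.sum_comm]
  simp only [dotProduct, vecMul, transpose_apply, diagonal_apply, mul_ite, mul_zero, ite_mul,
    zero_mul, Finset.sum_ite_eq, Finset.sum_ite_eq', Finset.mem_univ, if_true]
  refine Finset.sum_congr rfl fun i _ => ?_
  rw [Finset.sum_mul]
  refine Finset.sum_congr rfl fun j _ => ?_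
  ring

end aux

theorem statement6
    {n N m : ℕ} (hn : 0 < n) (hN : 0 < N) (hm : 0 < m)
    (Ar : Matrix (Fin n) (Fin n) ℝ) (B : Matrix (Fin n) (Fin m) ℝ)
    (Lam Lhalf : Matrix (Fin m) (Fin m) ℝ) (R P : Matrix (Fin n) (Fin n) ℝ)
    (hAr : Hurwitz Ar)
    (hLam : Lam.PosDef) (hLamDiag : Lam.IsDiag)
    (hLhalfDiag : Lhalf.IsDiag) (hLhalfSq : Lhalf * Lhalf = Lam)
    (hR : R.PosDef) (hP : P.PosDef)
    (hLyap : Arᵀ * P + P * Ar + R = 0)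
    (γ κ η ξ : ℝ) (hγ : 0 < γ) (hκ : 0 < κ) (hη : 0 < η) (hξ0 : 0 < ξ) (hξ1 : ξ < 1)
    (σx : ℝ → Fin N → ℝ)
    (e eL xt : ℝ → Fin n → ℝ) (Wt : ℝ → Matrix (Fin N) (Fin m) ℝ)
    (heL0 : eL 0 = 0) (hxt0 : xt 0 = 0)
    (he : ∀ t ≥ (0:ℝ), HasDerivAt e
          (Ar *ᵥ e t - (B * Lam * (Wt t)ᵀ) *ᵥ σx t - κ • (e t - eL t)) t)
    (hW : ∀ t ≥ (0:ℝ), ∀ i j, HasDerivAt (fun s => Wt s i j)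
          (γ * (σx t i * ((e t) ᵥ* (P * B)) j)) t)
    (heL : ∀ t ≥ (0:ℝ), HasDerivAt eL (Ar *ᵥ eL t + η • (e t - eL t)) t)
    (hxt : ∀ t ≥ (0:ℝ), HasDerivAt xt (Ar *ᵥ xt t + κ • (e t - eL t)) t)
    : (∀ t ≥ (0:ℝ),
        Vstar γ κ η ξ P R hP.1 hR.1 Lhalf (e t) (Wt t) (eL t) (xt t)
          ≤ Vstar γ κ η ξ P R hP.1 hR.1 Lhalf (e 0) (Wt 0) 0 0)
      ∧ (∃ C : ℝ, ∀ t ≥ (0:ℝ), norm2 (e t) ≤ C)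
      ∧ (∃ C : ℝ, ∀ t ≥ (0:ℝ), normF (Wt t) ≤ C)
      ∧ (∃ C : ℝ, ∀ t ≥ (0:ℝ), norm2 (eL t) ≤ C)
      ∧ (∃ C : ℝ, ∀ t ≥ (0:ℝ), norm2 (xt t) ≤ C) := by
  classical
  -- diagonal structure
  obtain ⟨d, hd⟩ : ∃ d : Fin m → ℝ, d = Matrix.diag Lhalf := ⟨_, rfl⟩
  have hLd : Lhalf = diagonal d := by rw [hd]; exact (hLhalfDiag.diagonal_diag).symm
  have hLamd : Lam = diagonal (fun j => d j * d j) := by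
    rw [← hLhalfSq]
    conv_lhs => rw [hLd]
    rw [diagonal_mul_diagonal]
  -- positivity constants
  have hlamP : 0 < lamMax hP.1 := lamMax_pos hn hP
  have hlamPm : 0 < lamMin hP.1 := lamMin_pos hn hP
  have hlamR : 0 < lamMin hR.1 := lamMin_pos hn hR
  have hc3 : 0 < 2 * ξ * κ⁻¹ * (lamMax hP.1)⁻¹ * lamMin hR.1 := by positivity
  obtain ⟨c3, hc3def⟩ : ∃ c : ℝ, c = 2 * ξ * κ⁻¹ * (lamMax hP.1)⁻¹ * lamMin hR.1 := ⟨_, rfl⟩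
  rw [← hc3def] at hc3
  -- trace as explicit sum
  have hTrFun : ∀ (W : Matrix (Fin N) (Fin m) ℝ),
      ((W * Lhalf)ᵀ * (W * Lhalf)).trace = ∑ j, ∑ i, (W i j * d j) * (W i j * d j) := by
    intro W
    rw [hLd, Matrix.trace]
    refine Finset.sum_congr rfl fun j _ => ?_
    rw [Matrix.diag_apply, Matrix.mul_apply]
    exact Finset.sum_congr rfl fun i _ => by rw [transpose_apply, mul_diagonal]
  -- Φ : the Lyapunov function along the trajectory, in explicit form
  obtain ⟨Φ, hΦ⟩ : ∃ Φ : ℝ → ℝ, Φ = fun s => e s ⬝ᵥ (P *ᵥ e s)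
      + γ⁻¹ * (∑ j, ∑ i, (Wt s i j * d j) * (Wt s i j * d j))
      + η⁻¹ * κ * (eL s ⬝ᵥ (P *ᵥ eL s)) + c3 * (xt s ⬝ᵥ (P *ᵥ xt s)) := ⟨_, rfl⟩
  have hVeq : ∀ s, Vstar γ κ η ξ P R hP.1 hR.1 Lhalf (e s) (Wt s) (eL s) (xt s) = Φ s := by
    intro s
    rw [hΦ, Vstar, Vlyap, hTrFun (Wt s), hc3def]
    try ring
  -- derivative of Φ
  obtain ⟨D, hD⟩ : ∃ D : ℝ → ℝ, D = fun s => -(e s ⬝ᵥ (R *ᵥ e s)) - η⁻¹ * κ * (eL s ⬝ᵥ (R *ᵥ eL s))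
      - c3 * (xt s ⬝ᵥ (R *ᵥ xt s))
      - 2 * κ * ((e s - eL s) ⬝ᵥ (P *ᵥ (e s - eL s)))
      + 2 * c3 * κ * (xt s ⬝ᵥ (P *ᵥ (e s - eL s))) := ⟨_, rfl⟩
  have hDer : ∀ t ≥ (0:ℝ), HasDerivAt Φ (D t) t := by
    intro t ht
    have h1 := hasDerivAt_quad P (he t ht)
    have h3 := hasDerivAt_quad P (heL t ht)
    have h4 := hasDerivAt_quad P (hxt t ht)
    have h2 : HasDerivAt (fun s => ∑ j, ∑ i, (Wt s i j * d j) * (Wt s i j * d j))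
        (∑ j, ∑ i, ((γ * (σx t i * ((e t) ᵥ* (P * B)) j)) * d j * (Wt t i j * d j)
          + (Wt t i j * d j) * ((γ * (σx t i * ((e t) ᵥ* (P * B)) j)) * d j))) t :=
      HasDerivAt.fun_sum fun j _ => HasDerivAt.fun_sum fun i _ =>
        ((hW t ht i j).mul_const (d j)).mul ((hW t ht i j).mul_const (d j))
    have H := ((h1.add (h2.const_mul γ⁻¹)).add (h3.const_mul (η⁻¹ * κ))).add (h4.const_mul c3)
    rw [hΦ]
    refine HasDerivAt.congr_deriv H ?_
    rw [hD]
    beta_reduce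
    obtain ⟨S, hS⟩ : ∃ S : ℝ, S = ∑ j, ∑ i, (σx t i * ((e t) ᵥ* (P * B)) j) * d j
        * (Wt t i j * d j) := ⟨_, rfl⟩
    have hrw : Ar *ᵥ e t - (B * Lam * (Wt t)ᵀ) *ᵥ σx t - κ • (e t - eL t)
        = Ar *ᵥ e t + (-((B * Lam * (Wt t)ᵀ) *ᵥ σx t) - κ • (e t - eL t)) := by
      module
    rw [hrw]
    have he2 := two_quad hP.1 hLyap (e t)
      (-((B * Lam * (Wt t)ᵀ) *ᵥ σx t) - κ • (e t - eL t))
    have hexp : e t ⬝ᵥ (P *ᵥ (-((B * Lam * (Wt t)ᵀ) *ᵥ σx t) - κ • (e t - eL t)))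
        = -(e t ⬝ᵥ (P *ᵥ ((B * Lam * (Wt t)ᵀ) *ᵥ σx t)))
          - κ * (e t ⬝ᵥ (P *ᵥ (e t - eL t))) := by
      rw [mulVec_sub, mulVec_neg, mulVec_smul, dotProduct_sub, dotProduct_neg, dotProduct_smul,
        smul_eq_mul]
    have hL2 := two_quad hP.1 hLyap (eL t) (η • (e t - eL t))
    have hLexp : eL t ⬝ᵥ (P *ᵥ (η • (e t - eL t))) = η * (eL t ⬝ᵥ (P *ᵥ (e t - eL t))) := by
      rw [mulVec_smul, dotProduct_smul, smul_eq_mul]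
    have hx2 := two_quad hP.1 hLyap (xt t) (κ • (e t - eL t))
    have hxexp : xt t ⬝ᵥ (P *ᵥ (κ • (e t - eL t))) = κ * (xt t ⬝ᵥ (P *ᵥ (e t - eL t))) := by
      rw [mulVec_smul, dotProduct_smul, smul_eq_mul]
    have hsplit : (e t - eL t) ⬝ᵥ (P *ᵥ (e t - eL t))
        = e t ⬝ᵥ (P *ᵥ (e t - eL t)) - eL t ⬝ᵥ (P *ᵥ (e t - eL t)) := sub_dotProduct _ _ _
    have hcr : e t ⬝ᵥ (P *ᵥ ((B * Lam * (Wt t)ᵀ) *ᵥ σx t)) = S := by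
      rw [hS, hLamd]; exact cross_id P B (Wt t) (σx t) (e t) d
    have hSig : (∑ j, ∑ i, ((γ * (σx t i * ((e t) ᵥ* (P * B)) j)) * d j * (Wt t i j * d j)
          + (Wt t i j * d j) * ((γ * (σx t i * ((e t) ᵥ* (P * B)) j)) * d j)))
        = 2 * γ * S := by
      rw [hS, Finset.mul_sum]
      refine Finset.sum_congr rfl fun j _ => ?_
      rw [Finset.mul_sum]
      exact Finset.sum_congr rfl fun i _ => by ring
    rw [he2, hL2, hx2, hexp, hLexp, hxexp, hsplit, hcr, hSig]
    field_simp
    ring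
  have hDle : ∀ t ≥ (0:ℝ), D t ≤ 0 := by
    intro t ht
    rw [hD]
    beta_reduce
    have hRe := psd_quad_nonneg hR.posSemidef (e t)
    have hReL := psd_quad_nonneg hR.posSemidef (eL t)
    have hPz := psd_quad_nonneg hP.posSemidef (e t - eL t)
    obtain ⟨ε, hεdef⟩ : ∃ ε : ℝ, ε = lamMin hR.1 / (κ * lamMax hP.1) := ⟨_, rfl⟩
    have hε : 0 < ε := by rw [hεdef]; positivity
    have hy := young_quad hP.posSemidef (xt t) (e t - eL t) hε
    have hA1 : xt t ⬝ᵥ (P *ᵥ xt t) ≤ lamMax hP.1 * (xt t ⬝ᵥ xt t) := rayleigh_upper hn hP.1 (xt t)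
    have hA2 : lamMin hR.1 * (xt t ⬝ᵥ xt t) ≤ xt t ⬝ᵥ (R *ᵥ xt t) := rayleigh_lower hn hR.1 (xt t)
    have hS1 : c3 * κ * ε * (xt t ⬝ᵥ (P *ᵥ xt t)) ≤ c3 * κ * ε * (lamMax hP.1 * (xt t ⬝ᵥ xt t)) :=
      mul_le_mul_of_nonneg_left hA1 (by positivity)
    have hS2 : c3 * κ * ε * (lamMax hP.1 * (xt t ⬝ᵥ xt t)) = c3 * (lamMin hR.1 * (xt t ⬝ᵥ xt t)) := by
      rw [hεdef]; field_simp
    have hS3 : c3 * (lamMin hR.1 * (xt t ⬝ᵥ xt t)) ≤ c3 * (xt t ⬝ᵥ (R *ᵥ xt t)) :=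
      mul_le_mul_of_nonneg_left hA2 hc3.le
    have hY2 : c3 * κ * (2 * (xt t ⬝ᵥ (P *ᵥ (e t - eL t))))
        ≤ c3 * κ * (ε * (xt t ⬝ᵥ (P *ᵥ xt t)) + ε⁻¹ * ((e t - eL t) ⬝ᵥ (P *ᵥ (e t - eL t)))) :=
      mul_le_mul_of_nonneg_left hy (by positivity)
    have hid2 : c3 * κ * (ε⁻¹ * ((e t - eL t) ⬝ᵥ (P *ᵥ (e t - eL t))))
        = 2 * ξ * κ * ((e t - eL t) ⬝ᵥ (P *ᵥ (e t - eL t))) := by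
      rw [hεdef, hc3def]; field_simp
    have hzz : 0 ≤ (2 * κ - 2 * ξ * κ) * ((e t - eL t) ⬝ᵥ (P *ᵥ (e t - eL t))) :=
      mul_nonneg (by nlinarith) hPz
    have hb2 : 0 ≤ η⁻¹ * κ * (eL t ⬝ᵥ (R *ᵥ eL t)) := mul_nonneg (by positivity) hReL
    linarith [hS1, hS2, hS3, hY2, hid2, hzz, hb2, hRe]
  -- monotonicity
  have hMono : ∀ t ≥ (0:ℝ), Φ t ≤ Φ 0 := by
    have hanti : AntitoneOn Φ (Set.Ici (0:ℝ)) := by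
      refine antitoneOn_of_deriv_nonpos (convex_Ici 0)
        (fun s hs => (hDer s hs).continuousAt.continuousWithinAt)
        (fun s hs => ?_) (fun s hs => ?_)
      · rw [interior_Ici] at hs
        exact ((hDer s hs.le).differentiableAt).differentiableWithinAt
      · rw [interior_Ici] at hs
        rw [(hDer s hs.le).deriv]
        exact hDle s hs.le
    intro t ht
    exact hanti Set.self_mem_Ici ht ht
  -- nonnegativity of the pieces
  have hquadP : ∀ v : Fin n → ℝ, 0 ≤ v ⬝ᵥ (P *ᵥ v) := psd_quad_nonneg hP.posSemidef
  have hTrNN : ∀ s, 0 ≤ ∑ j, ∑ i, (Wt s i j * d j) * (Wt s i j * d j) := fun s =>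
    Finset.sum_nonneg fun j _ => Finset.sum_nonneg fun i _ => mul_self_nonneg _
  obtain ⟨V0, hV0⟩ : ∃ V : ℝ, V = Φ 0 := ⟨_, rfl⟩
  have hΦapp : ∀ s, Φ s = e s ⬝ᵥ (P *ᵥ e s)
      + γ⁻¹ * (∑ j, ∑ i, (Wt s i j * d j) * (Wt s i j * d j))
      + η⁻¹ * κ * (eL s ⬝ᵥ (P *ᵥ eL s)) + c3 * (xt s ⬝ᵥ (P *ᵥ xt s)) := fun s => by rw [hΦ]
  have hpieces : ∀ t ≥ (0:ℝ),
      e t ⬝ᵥ (P *ᵥ e t) ≤ V0 ∧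
      γ⁻¹ * (∑ j, ∑ i, (Wt t i j * d j) * (Wt t i j * d j)) ≤ V0 ∧
      η⁻¹ * κ * (eL t ⬝ᵥ (P *ᵥ eL t)) ≤ V0 ∧
      c3 * (xt t ⬝ᵥ (P *ᵥ xt t)) ≤ V0 := by
    intro t ht
    have h : e t ⬝ᵥ (P *ᵥ e t)
      + γ⁻¹ * (∑ j, ∑ i, (Wt t i j * d j) * (Wt t i j * d j))
      + η⁻¹ * κ * (eL t ⬝ᵥ (P *ᵥ eL t)) + c3 * (xt t ⬝ᵥ (P *ᵥ xt t)) ≤ V0 := by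
      rw [← hΦapp t, hV0]; exact hMono t ht
    have h1 := hquadP (e t); have h2 := hTrNN t; have h3 := hquadP (eL t)
    have h4 := hquadP (xt t)
    have hb : 0 ≤ γ⁻¹ * (∑ j, ∑ i, (Wt t i j * d j) * (Wt t i j * d j)) := by positivity
    have hb2 : 0 ≤ η⁻¹ * κ * (eL t ⬝ᵥ (P *ᵥ eL t)) := by positivity
    have hb3 : 0 ≤ c3 * (xt t ⬝ᵥ (P *ᵥ xt t)) := by positivity
    exact ⟨by linarith, by linarith, by linarith, by linarith⟩
  -- norm bound helper
  have hbound : ∀ (K : ℝ) (v : Fin n → ℝ), v ⬝ᵥ (P *ᵥ v) ≤ K →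
      norm2 v ≤ Real.sqrt (K / lamMin hP.1) := by
    intro K v hv
    have h1 : lamMin hP.1 * (v ⬝ᵥ v) ≤ K := le_trans (rayleigh_lower hn hP.1 v) hv
    have h2 : v ⬝ᵥ v ≤ K / lamMin hP.1 := by
      rw [le_div_iff₀ hlamPm]; linarith
    have h3 : norm2 v = Real.sqrt (v ⬝ᵥ v) := by
      rw [norm2]; congr 1; simp [dotProduct, pow_two]
    rw [h3]; exact Real.sqrt_le_sqrt h2
  refine ⟨?_, ?_, ?_, ?_, ?_⟩
  · intro t ht
    rw [hVeq t]
    have h0 : Vstar γ κ η ξ P R hP.1 hR.1 Lhalf (e 0) (Wt 0) 0 0 = Φ 0 := by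
      have h1 := hVeq 0; rw [heL0, hxt0] at h1; exact h1
    rw [h0]; exact hMono t ht
  · exact ⟨Real.sqrt (V0 / lamMin hP.1), fun t ht => hbound V0 (e t) (hpieces t ht).1⟩
  · -- Frobenius norm bound for Wt
    haveI : Nonempty (Fin m) := ⟨⟨0, hm⟩⟩
    have hdd : ∀ j, 0 < d j * d j := by
      intro j
      have hx : (Pi.single j 1 : Fin m → ℝ) ≠ 0 := by
        intro h0; have := congrFun h0 j; simp at this
      have h2 : 0 < Pi.single j 1 ⬝ᵥ (Lam *ᵥ Pi.single j 1) := by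
        simpa using hLam.dotProduct_mulVec_pos hx
      have h3 : Pi.single j 1 ⬝ᵥ (Lam *ᵥ Pi.single j 1) = d j * d j := by
        rw [hLamd]
        simp [dotProduct, mulVec_diagonal, Pi.single_apply]
      rwa [h3] at h2
    obtain ⟨j0, hj0⟩ := Finite.exists_min (fun j => d j * d j)
    refine ⟨Real.sqrt ((γ * V0) / (d j0 * d j0)), fun t ht => ?_⟩
    have hT : γ⁻¹ * (∑ j, ∑ i, (Wt t i j * d j) * (Wt t i j * d j)) ≤ V0 := (hpieces t ht).2.1
    have hS : (∑ j, ∑ i, (Wt t i j * d j) * (Wt t i j * d j)) ≤ γ * V0 := by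
      have h5 := mul_le_mul_of_nonneg_left hT hγ.le
      rwa [← mul_assoc, mul_inv_cancel₀ hγ.ne', one_mul] at h5
    have hsum : (d j0 * d j0) * (∑ i, ∑ j, Wt t i j ^ 2)
        ≤ ∑ j, ∑ i, (Wt t i j * d j) * (Wt t i j * d j) := by
      conv_lhs => rw [Finset.sum_comm]
      rw [Finset.mul_sum]
      refine Finset.sum_le_sum fun j _ => ?_
      rw [Finset.mul_sum]
      refine Finset.sum_le_sum fun i _ => ?_
      calc d j0 * d j0 * Wt t i j ^ 2 = Wt t i j ^ 2 * (d j0 * d j0) := by ring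
        _ ≤ Wt t i j ^ 2 * (d j * d j) := mul_le_mul_of_nonneg_left (hj0 j) (sq_nonneg _)
        _ = (Wt t i j * d j) * (Wt t i j * d j) := by ring
    have hfin : (∑ i, ∑ j, Wt t i j ^ 2) ≤ (γ * V0) / (d j0 * d j0) := by
      rw [le_div_iff₀ (hdd j0)]
      calc (∑ i, ∑ j, Wt t i j ^ 2) * (d j0 * d j0)
          = (d j0 * d j0) * (∑ i, ∑ j, Wt t i j ^ 2) := by ring
        _ ≤ ∑ j, ∑ i, (Wt t i j * d j) * (Wt t i j * d j) := hsum
        _ ≤ γ * V0 := hS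
    rw [normF]
    exact Real.sqrt_le_sqrt hfin
  · refine ⟨Real.sqrt ((V0 / (η⁻¹ * κ)) / lamMin hP.1), fun t ht => ?_⟩
    refine hbound _ _ ?_
    have := (hpieces t ht).2.2.1
    rw [le_div_iff₀ (by positivity : (0:ℝ) < η⁻¹ * κ)]; linarith
  · refine ⟨Real.sqrt ((V0 / c3) / lamMin hP.1), fun t ht => ?_⟩
    refine hbound _ _ ?_
    have := (hpieces t ht).2.2.2
    rw [le_div_iff₀ hc3]; linarith
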